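/- For any w ∈ C, the Fréchet normal cone satisfies N̂(w, C) = { y ∈ ℝ^d : y^i = 0 for all i ∈ I(w) ∪ J(w) }. -/

import Mathlib

open MeasureTheory Filter
open scoped Classical BigOperators

noncomputable section

/-- The closed `l∞`-ball of radius `r` centered at `0` in `ℝ^d`. -/
def Binf (d : ℕ) (r : ℝ) : Set (EuclideanSpace ℝ (Fin d)) := {z | ∀ i, |z i| ≤ r}

/-- The weighted group `l0`-norm constraint set
`C := {w : Σ_i p_i · 1_{w^i ≠ 0}(w) ≤ m}`, where the partition of coordinates into `n` blocks
is encoded by `blk : Fin d → Fin n` (coordinate `j` belongs to block `blk j`). -/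
def groupC (d n : ℕ) (blk : Fin d → Fin n) (p : Fin n → ℝ) (m : ℝ) :
    Set (EuclideanSpace ℝ (Fin d)) :=
  {w | (∑ i : Fin n, if ∃ j, blk j = i ∧ w j ≠ 0 then p i else 0) ≤ m}

/-- The Fréchet normal cone of `S` at `w`:
`N̂(w,S) = {y : limsup_{x → w, x ∈ S, x ≠ w} ⟨y, x−w⟩/‖x−w‖₂ ≤ 0}`, expressed in ε-δ form. -/
def frechetNormalCone {d : ℕ} (S : Set (EuclideanSpace ℝ (Fin d)))
    (w : EuclideanSpace ℝ (Fin d)) : Set (EuclideanSpace ℝ (Fin d)) :=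
  {y | ∀ ε > (0 : ℝ), ∃ δ > (0 : ℝ), ∀ x ∈ S, x ≠ w → ‖x - w‖ < δ →
    (inner ℝ y (x - w) : ℝ) ≤ ε * ‖x - w‖}

/-- The set of block indices whose block of `w` is nonzero: `I(w) := {i : w^i ≠ 0}`. -/
def blkSupport {d n : ℕ} (blk : Fin d → Fin n) (w : EuclideanSpace ℝ (Fin d)) :
    Set (Fin n) := {i | ∃ j, blk j = i ∧ w j ≠ 0}

/-- The aggregate penalty `Σ_{i ∈ I(w)} p_i` of the nonzero blocks of `w`. -/
def suppPenalty {d n : ℕ} (blk : Fin d → Fin n) (p : Fin n → ℝ)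
    (w : EuclideanSpace ℝ (Fin d)) : ℝ :=
  ∑ i : Fin n, if i ∈ blkSupport blk w then p i else 0

/-- `J(w) := {j ∉ I(w) : Σ_{i ∈ I(w)} p_i + p_j ≤ m}`, the blocks of `w` that are zero but are
not constrained to be. -/
def blkFree {d n : ℕ} (blk : Fin d → Fin n) (p : Fin n → ℝ) (m : ℝ)
    (w : EuclideanSpace ℝ (Fin d)) : Set (Fin n) :=
  {i | i ∉ blkSupport blk w ∧ suppPenalty blk p w + p i ≤ m}

private def setSum {n : ℕ} (p : Fin n → ℝ) (S : Set (Fin n)) : ℝ :=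
  ∑ i : Fin n, if i ∈ S then p i else 0

private lemma setSum_mono {n : ℕ} (p : Fin n → ℝ) (hp : ∀ i, 0 < p i)
    {S T : Set (Fin n)} (hST : S ⊆ T) : setSum p S ≤ setSum p T := by
  apply Finset.sum_le_sum
  intro i _
  by_cases h : i ∈ S
  · rw [if_pos h, if_pos (hST h)]
  · rw [if_neg h]
    split_ifs with h2
    · exact (hp i).le
    · exact le_rfl

private lemma setSum_insert {n : ℕ} (p : Fin n → ℝ) {S : Set (Fin n)} {i0 : Fin n}
    (h : i0 ∉ S) : setSum p (S ∪ {i0}) = setSum p S + p i0 := by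
  unfold setSum
  trans (∑ i : Fin n, ((if i ∈ S then p i else 0) + (if i = i0 then p i else 0)))
  · apply Finset.sum_congr rfl
    intro i _
    by_cases h1 : i ∈ S
    · rw [if_pos (Set.mem_union_left _ h1), if_pos h1,
        if_neg (show ¬i = i0 from fun e => h (e ▸ h1)), add_zero]
    · by_cases h2 : i = i0
      · rw [if_pos (Set.mem_union_right _ (Set.mem_singleton_iff.mpr h2)),
          if_neg h1, if_pos h2, zero_add, h2]
      · rw [if_neg ?_, if_neg h1, if_neg h2, add_zero]
        rintro (h3 | h3)
        · exact h1 h3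
        · exact h2 h3
  · rw [Finset.sum_add_distrib]
    congr 1
    simp

private lemma suppPenalty_eq {d n : ℕ} (blk : Fin d → Fin n) (p : Fin n → ℝ)
    (x : EuclideanSpace ℝ (Fin d)) :
    suppPenalty blk p x = setSum p (blkSupport blk x) := by
  unfold suppPenalty setSum
  exact Finset.sum_congr rfl fun i _ => by congr

private lemma mem_groupC_iff {d n : ℕ} (blk : Fin d → Fin n) (p : Fin n → ℝ) (m : ℝ)
    (x : EuclideanSpace ℝ (Fin d)) :
    x ∈ groupC d n blk p m ↔ setSum p (blkSupport blk x) ≤ m := by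
  have he : (∑ i : Fin n, if ∃ j, blk j = i ∧ x j ≠ 0 then p i else 0)
      = setSum p (blkSupport blk x) := by
    apply Finset.sum_congr rfl
    intro i _
    by_cases hc : ∃ j, blk j = i ∧ x j ≠ 0
    · rw [if_pos hc, if_pos (show i ∈ blkSupport blk x from hc)]
    · rw [if_neg hc, if_neg (show i ∉ blkSupport blk x from hc)]
  simp only [groupC, Set.mem_setOf_eq, he]

private lemma coord_le_norm {d : ℕ} (x : EuclideanSpace ℝ (Fin d)) (j : Fin d) :
    |x j| ≤ ‖x‖ := by
  rw [EuclideanSpace.norm_eq, ← Real.sqrt_sq_eq_abs]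
  apply Real.sqrt_le_sqrt
  have := Finset.single_le_sum (f := fun i => ‖x i‖ ^ 2)
    (fun i _ => sq_nonneg _) (Finset.mem_univ j)
  simpa [Real.norm_eq_abs, sq_abs] using this

/-- For any `w ∈ C`, the Fréchet normal cone satisfies
`N̂(w, C) = {y : y^i = 0 for all i ∈ I(w) ∪ J(w)}`. -/
theorem frechet_normal_cone_C
    (d n : ℕ) (blk : Fin d → Fin n) (hblk : Function.Surjective blk)
    (p : Fin n → ℝ) (hp : ∀ i, 0 < p i) (m : ℝ) (hm : 0 < m)
    (w : EuclideanSpace ℝ (Fin d)) (hw : w ∈ groupC d n blk p m) :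
    frechetNormalCone (groupC d n blk p m) w
      = {y : EuclideanSpace ℝ (Fin d) |
          ∀ i : Fin n, (i ∈ blkSupport blk w ∨ i ∈ blkFree blk p m w) →
            ∀ j : Fin d, blk j = i → y j = 0} := by
  have hw' : setSum p (blkSupport blk w) ≤ m := (mem_groupC_iff blk p m w).mp hw
  ext y
  simp only [Set.mem_setOf_eq]
  constructor
  · -- ⊆ : members of the normal cone vanish on I ∪ J
    intro hy i hi j hj
    set t0 : ℝ := if w j = 0 then 1 else |w j| with ht0def
    have ht0 : 0 < t0 := by
      rw [ht0def]; split_ifs with h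
      · norm_num
      · exact abs_pos.mpr h
    -- For small nonzero `s`, `w + s·e_j ∈ C`.
    have hmem : ∀ s : ℝ, s ≠ 0 → |s| < t0 →
        (w + EuclideanSpace.single j s) ∈ groupC d n blk p m := by
      intro s hs _
      have hsub : blkSupport blk (w + EuclideanSpace.single j s)
          ⊆ blkSupport blk w ∪ {i} := by
        rintro i' ⟨j', hj', hne⟩
        by_cases hjj : j' = j
        · subst hjj
          right
          exact Set.mem_singleton_iff.mpr (hj'.symm.trans hj)
        · left
          refine ⟨j', hj', fun h0 => hne ?_⟩
          have hap : (w + EuclideanSpace.single j s) j'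
              = w j' + (if j' = j then s else 0) := by
            simp [EuclideanSpace.single_apply]
          rw [hap, if_neg hjj, add_zero, h0]
      have hb := setSum_mono p hp hsub
      refine (mem_groupC_iff blk p m _).mpr (le_trans hb ?_)
      rcases hi with hi | hi
      · rw [Set.union_eq_self_of_subset_right (by simpa using hi)]
        exact hw'
      · rw [setSum_insert p hi.1]
        have := hi.2
        rw [suppPenalty_eq] at this
        exact this
    -- From the normal cone inequality in both directions conclude `y j = 0`.
    have key : ∀ ε > (0 : ℝ), |y j| ≤ ε := by
      intro ε hε
      obtain ⟨δ, hδ, hδ'⟩ := hy ε hε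
      set t : ℝ := min δ t0 / 2 with htdef
      have ht : 0 < t := by positivity
      have htδ : t < δ := by
        have := min_le_left δ t0; rw [htdef]; linarith
      have htt0 : t < t0 := by
        have := min_le_right δ t0; rw [htdef]; linarith
      have step : ∀ s : ℝ, s ≠ 0 → |s| = t → s * y j ≤ ε * t := by
        intro s hs habs
        have hx : (w + EuclideanSpace.single j s) ∈ groupC d n blk p m :=
          hmem s hs (by rw [habs]; exact htt0)
        have hxe : (w + EuclideanSpace.single j s) - w = EuclideanSpace.single j s := by
          abel
        have hxne : (w + EuclideanSpace.single j s) ≠ w := by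
          intro h
          apply hs
          have := congrArg (fun z : EuclideanSpace ℝ (Fin d) => z j) h
          simpa [EuclideanSpace.single_apply] using this
        have hnorm : ‖EuclideanSpace.single j s‖ = t := by
          rw [EuclideanSpace.norm_single, Real.norm_eq_abs, habs]
        have hlt : ‖(w + EuclideanSpace.single j s) - w‖ < δ := by
          rw [hxe, hnorm]; exact htδ
        have hineq := hδ' _ hx hxne hlt
        rw [hxe, hnorm] at hineq
        have hin : (inner ℝ y (EuclideanSpace.single j s) : ℝ) = s * y j := by
          rw [EuclideanSpace.inner_single_right]
          simp
        rw [hin] at hineq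
        exact hineq
      have h1 : t * y j ≤ ε * t := by
        have := step t ht.ne' (abs_of_pos ht)
        linarith [this]
      have h2 : -t * y j ≤ ε * t := by
        have := step (-t) (by simpa using ht.ne') (by rw [abs_neg, abs_of_pos ht])
        linarith [this]
      rw [abs_le]
      constructor <;> nlinarith
    by_contra hne
    have hpos : 0 < |y j| := abs_pos.mpr hne
    have := key (|y j| / 2) (by positivity)
    linarith
  · -- ⊇ : vectors vanishing on I ∪ J are in the normal cone
    intro hy ε hε
    set T : Finset (Fin d) := Finset.univ.filter (fun j => w j ≠ 0) with hT
    set δ : ℝ := (insert (1 : ℝ) (T.image fun j => |w j|)).min'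
      (Finset.insert_nonempty _ _) with hδdef
    have hδpos : 0 < δ := by
      rw [hδdef, Finset.lt_min'_iff]
      intro b hb
      rcases Finset.mem_insert.mp hb with hb | hb
      · rw [hb]; norm_num
      · obtain ⟨j, hj, rfl⟩ := Finset.mem_image.mp hb
        exact abs_pos.mpr (Finset.mem_filter.mp hj).2
    refine ⟨δ, hδpos, ?_⟩
    intro x hx hxne hxδ
    have hxC : setSum p (blkSupport blk x) ≤ m := (mem_groupC_iff blk p m x).mp hx
    -- every nonzero coordinate of w stays nonzero at x
    have hcoord : ∀ j : Fin d, w j ≠ 0 → x j ≠ 0 := by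
      intro j hwj hxj
      have hjT : j ∈ T := Finset.mem_filter.mpr ⟨Finset.mem_univ _, hwj⟩
      have hδle : δ ≤ |w j| := Finset.min'_le _ _
        (Finset.mem_insert_of_mem (Finset.mem_image_of_mem _ hjT))
      have h1 : |x j - w j| ≤ ‖x - w‖ := by
        have := coord_le_norm (x - w) j
        simpa using this
      rw [hxj, zero_sub, abs_neg] at h1
      linarith
    have hsupp : blkSupport blk w ⊆ blkSupport blk x := by
      rintro i ⟨j, hj, hne⟩
      exact ⟨j, hj, hcoord j hne⟩
    -- the inner product vanishes
    have hzero : (inner ℝ y (x - w) : ℝ) = 0 := by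
      rw [PiLp.inner_apply]
      apply Finset.sum_eq_zero
      intro j _
      have hsub : (x - w) j = x j - w j := rfl
      simp only [RCLike.inner_apply, conj_trivial, hsub]
      by_cases hyj : y j = 0
      · rw [hyj, mul_zero]
      · by_cases hS : blk j ∈ blkSupport blk w
        · exact absurd (hy (blk j) (Or.inl hS) j rfl) hyj
        · have hwj : w j = 0 := by
            by_contra hwj
            exact hS ⟨j, rfl, hwj⟩
          by_cases hxj : x j = w j
          · rw [hxj, sub_self, zero_mul]
          · have hxj0 : x j ≠ 0 := by rw [hwj] at hxj; exact hxj
            have hSx : blk j ∈ blkSupport blk x := ⟨j, rfl, hxj0⟩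
            have hsub2 : blkSupport blk w ∪ {blk j} ⊆ blkSupport blk x := by
              rintro i (hi | hi)
              · exact hsupp hi
              · rw [Set.mem_singleton_iff.mp hi]; exact hSx
            have hfree : blk j ∈ blkFree blk p m w := by
              refine ⟨hS, ?_⟩
              have h1 := setSum_mono p hp hsub2
              rw [setSum_insert p hS] at h1
              rw [suppPenalty_eq]
              exact le_trans h1 hxC
            exact absurd (hy (blk j) (Or.inr hfree) j rfl) hyj
    rw [hzero]
    exact mul_nonneg hε.le (norm_nonneg _)
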